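/- Rollout bound under a Lyapunov drift condition: under the hypotheses of the rollout performance bound (V* = T V* bounded with V*(t)=0, ‖V − V*‖∞ ≤ ε, π_R the rollout policy for V, proper from x), if in addition there exist L : X → [0,∞) and c > 0 such that E[ L(F(x', π_R(x'), w)) ] ≤ L(x') − c for every nonterminal state x' visited by the closed loop, then J^{π_R}(x) − V*(x) ≤ (2ε/c) · L(x). -/

import Mathlib

open MeasureTheory ProbabilityTheory Filter
open scoped ENNReal
open scoped Topology

open Classical in
/-- Bellman operator of the SSP: `(T V)(x) = inf_{u ∈ U(x)} ( f(x,u) + ∫ V(F(x,u,w)) dμ(w) )`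
for nonterminal `x`, and `(T V)(t) = 0`. -/
noncomputable def bellman {X U W : Type*} [MeasurableSpace W] (μ : Measure W)
    (t : X) (Ua : X → Set U) (f : X → U → ℝ) (F : X → U → W → X)
    (V : X → ℝ) (x : X) : ℝ :=
  if x = t then 0 else ⨅ u : Ua x, (f x (u : U) + ∫ w, V (F x (u : U) w) ∂μ)

/-- Closed-loop trajectory driven by a disturbance sequence `ω : ℕ → W`:
`x₀ = x`, `x_{k+1} = F(x_k, π(x_k), ω_k)`. -/
def traj {X U W : Type*} (F : X → U → W → X) (π : X → U) (x : X) (ω : ℕ → W) : ℕ → X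
  | 0 => x
  | k + 1 => F (traj F π x ω k) (π (traj F π x ω k)) (ω k)

/-- The trajectory as a family of random variables on an abstract sample space `Ω`,
given the disturbance random variables `ξ k : Ω → W`. -/
def trajOn {X U W Ω : Type*} (F : X → U → W → X) (π : X → U) (x : X)
    (ξ : ℕ → Ω → W) (k : ℕ) (ω : Ω) : X :=
  traj F π x (fun i => ξ i ω) k

/-- Hitting time `τ = inf { k ≥ 0 : x_k = t }` of the terminal state (`∞` if never reached),
valued in `ℝ≥0∞`. -/
noncomputable def hitTime {X Ω : Type*} (t : X) (Y : ℕ → Ω → X) (ω : Ω) : ℝ≥0∞ :=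
  ⨅ (k : ℕ) (_ : Y k ω = t), (k : ℝ≥0∞)

/-- Total expected cost `J = E[ Σ_{k=0}^{τ-1} f(x_k, π(x_k)) ]` (in `ℝ≥0∞`; the stage cost
is nonnegative). -/
noncomputable def totalCost {X U Ω : Type*} [MeasurableSpace Ω] (P : Measure Ω)
    (t : X) (f : X → U → ℝ) (π : X → U) (Y : ℕ → Ω → X) : ℝ≥0∞ :=
  ∫⁻ ω, ∑' (k : ℕ), (if (k : ℝ≥0∞) < hitTime t Y ω
    then ENNReal.ofReal (f (Y k ω) (π (Y k ω))) else 0) ∂P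

/-- Expected hitting time `E[τ]` (in `ℝ≥0∞`). -/
noncomputable def expHit {X Ω : Type*} [MeasurableSpace Ω] (P : Measure Ω)
    (t : X) (Y : ℕ → Ω → X) : ℝ≥0∞ :=
  ∫⁻ ω, hitTime t Y ω ∂P

theorem traj_congr {X U W : Type*} (F : X → U → W → X) (π : X → U) (x : X)
    {ω ω' : ℕ → W} : ∀ {k : ℕ}, (∀ i < k, ω i = ω' i) → traj F π x ω k = traj F π x ω' k
  | 0, _ => rfl
  | k + 1, h => by
      have ih := traj_congr F π x (ω := ω) (ω' := ω') (k := k) (fun i hi => h i (by omega))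
      simp [traj, ih, h k (by omega)]

theorem traj_absorb {X U W : Type*} (F : X → U → W → X) (π : X → U) (x : X) (t : X)
    (habs : ∀ w, F t (π t) w = t) (ω : ℕ → W) {k : ℕ} (hk : traj F π x ω k = t) :
    ∀ n, k ≤ n → traj F π x ω n = t := by
  intro n hn
  induction n with
  | zero => exact (Nat.le_zero.mp hn) ▸ hk
  | succ m ih =>
      rcases Nat.lt_or_ge k (m+1) with h | h
      · have hm : traj F π x ω m = t := ih (by omega)
        simp [traj, hm, habs]
      · have : k = m + 1 := by omega
        exact this ▸ hk

theorem traj_measurable {X U W : Type*} [MeasurableSpace X] [MeasurableSpace U]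
    [MeasurableSpace W] {F : X → U → W → X} {π : X → U}
    (hF : Measurable fun p : X × U × W => F p.1 p.2.1 p.2.2) (hπ : Measurable π)
    (x : X) (k : ℕ) : Measurable fun ω : ℕ → W => traj F π x ω k := by
  induction k with
  | zero => exact measurable_const
  | succ m ih =>
      have : (fun ω : ℕ → W => traj F π x ω (m+1))
          = fun ω => (fun p : X × U × W => F p.1 p.2.1 p.2.2)
              (traj F π x ω m, π (traj F π x ω m), ω m) := rfl
      rw [this]
      exact hF.comp (ih.prodMk ((hπ.comp ih).prodMk (measurable_pi_apply m)))

/-- Rollout bound under a Lyapunov drift condition: under the hypotheses of the rollout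
performance bound, if in addition `E[L(F(x', π_R(x'), w))] ≤ L(x') - c` at every nonterminal
state visited by the closed loop (with `L ≥ 0`, `c > 0`), then
`J^{π_R}(x) - V*(x) ≤ (2ε/c) · L(x)`. -/
theorem rollout_bound_lyapunov
    {X U W Ω : Type*} [MeasurableSpace X] [MeasurableSingletonClass X]
    [MeasurableSpace U] [MeasurableSpace W] [MeasurableSpace Ω]
    (μ : Measure W) [IsProbabilityMeasure μ] (P : Measure Ω) [IsProbabilityMeasure P]
    (t : X) (u0 : U) (Ua : X → Set U) (F : X → U → W → X) (f : X → U → ℝ)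
    -- SSP model: nonempty control sets, nonnegative measurable stage cost, measurable dynamics,
    -- absorbing cost-free terminal state
    (hUne : ∀ y, (Ua y).Nonempty) (hfnn : ∀ y u, 0 ≤ f y u)
    (hFmeas : Measurable fun p : X × U × W => F p.1 p.2.1 p.2.2)
    (hfmeas : Measurable fun p : X × U => f p.1 p.2)
    (hUt : Ua t = {u0}) (hft : f t u0 = 0) (hFt : ∀ w, F t u0 w = t)
    -- V* : bounded measurable, V*(t)=0, Bellman fixed point, well-defined one-step integrals
    (Vstar : X → ℝ) (hVsmeas : Measurable Vstar) (hVsbdd : ∃ C, ∀ y, |Vstar y| ≤ C)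
    (hVst : Vstar t = 0) (hVsfix : ∀ y, Vstar y = bellman μ t Ua f F Vstar y)
    (hVsint : ∀ y u, Integrable (fun w => Vstar (F y u w)) μ)
    -- V : bounded measurable surrogate with V(t)=0 and ‖V - V*‖∞ ≤ ε
    (V : X → ℝ) (hVmeas : Measurable V) (hVbdd : ∃ C, ∀ y, |V y| ≤ C) (hVt : V t = 0)
    (hVint : ∀ y u, Integrable (fun w => V (F y u w)) μ)
    (ε : ℝ) (hε : 0 ≤ ε) (happrox : ∀ y, |V y - Vstar y| ≤ ε)
    (πR : X → U) (hπmeas : Measurable πR)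
    -- rollout (one-step greedy) policy for V, with the minimum attained
    (hπt : πR t = u0)
    (hgreedy : ∀ y, y ≠ t → πR y ∈ Ua y ∧ ∀ u ∈ Ua y,
      f y (πR y) + ∫ w, V (F y (πR y) w) ∂μ ≤ f y u + ∫ w, V (F y u w) ∂μ)
    -- i.i.d. disturbance sequence with common law μ on an abstract probability space
    (ξ : ℕ → Ω → W) (hξmeas : ∀ k, Measurable (ξ k))
    (hξindep : iIndepFun ξ P)
    (hξlaw : ∀ k, P.map (ξ k) = μ)
    -- properness of the closed loop from x: τ < ∞ a.s. and J(x) < ∞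
    (x : X)
    (hproper_tau : ∀ᵐ ω ∂P, hitTime t (trajOn F πR x ξ) ω < ⊤)
    (hproper_J : totalCost P t f πR (trajOn F πR x ξ) < ⊤)
    (L : X → ℝ) (hL0 : ∀ y, 0 ≤ L y) (hLmeas : Measurable L)
    (hLint : ∀ y u, Integrable (fun w => L (F y u w)) μ)
    (c : ℝ) (hc : 0 < c)
    (hdrift : ∀ ω k, trajOn F πR x ξ k ω ≠ t →
      ∫ w, L (F (trajOn F πR x ξ k ω) (πR (trajOn F πR x ξ k ω)) w) ∂μ
        ≤ L (trajOn F πR x ξ k ω) - c) :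
    (totalCost P t f πR (trajOn F πR x ξ)).toReal - Vstar x ≤ 2 * ε / c * L x := by
  classical
  set Y := trajOn F πR x ξ with hYdef
  obtain ⟨C, hC⟩ := hVsbdd
  have hCnn : 0 ≤ C := le_trans (abs_nonneg _) (hC t)
  have habs : ∀ w, F t (πR t) w = t := fun w => by rw [hπt]; exact hFt w
  have hWne : Nonempty W := by
    by_contra h
    rw [not_nonempty_iff] at h
    have h1 : μ = 0 := μ.eq_zero_of_isEmpty
    have h2 := measure_univ (μ := μ)
    rw [h1] at h2; simp at h2
  have hYmeas : ∀ k, Measurable (Y k) := by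
    intro k
    have h1 : Measurable fun ω : Ω => (fun i : ℕ => ξ i ω) :=
      measurable_pi_lambda _ fun i => hξmeas i
    exact (traj_measurable hFmeas hπmeas x k).comp h1
  have mstep : Measurable fun p : X × W => F p.1 (πR p.1) p.2 :=
    hFmeas.comp (measurable_fst.prodMk ((hπmeas.comp measurable_fst).prodMk measurable_snd))
  have hfk : ∀ k, Measurable fun ω => f (Y k ω) (πR (Y k ω)) := fun k =>
    hfmeas.comp ((hYmeas k).prodMk (hπmeas.comp (hYmeas k)))
  -- independence of the state at time k from the k-th disturbance
  have hindep : ∀ k, IndepFun (Y k) (ξ k) P := by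
    intro k
    have hd : Disjoint (Finset.range k) ({k} : Finset ℕ) := by
      simp [Finset.disjoint_singleton_right]
    have h1 := hξindep.indepFun_finset (Finset.range k) {k} hd hξmeas
    set w0 : W := Classical.arbitrary W with hw0
    set G : ({i // i ∈ Finset.range k} → W) → X :=
      fun v => traj F πR x (fun i => if h : i ∈ Finset.range k then v ⟨i, h⟩ else w0) k with hGdef
    have hGmeas : Measurable G := by
      apply (traj_measurable hFmeas hπmeas x k).comp
      apply measurable_pi_lambda
      intro i
      by_cases h : i ∈ Finset.range k
      · simp only [dif_pos h]; exact measurable_pi_apply _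
      · simp only [dif_neg h]; exact measurable_const
    have hev : Measurable fun v : ({i // i ∈ ({k} : Finset ℕ)} → W) =>
        v ⟨k, Finset.mem_singleton_self k⟩ := measurable_pi_apply _
    have h2 := h1.comp hGmeas hev
    have e1 : (G ∘ fun a (i : {i // i ∈ Finset.range k}) => ξ i a) = Y k := by
      funext ω
      show G (fun i => ξ (i : ℕ) ω) = Y k ω
      apply traj_congr
      intro i hi
      simp [Finset.mem_range.mpr hi]
    have e2 : ((fun v : ({i // i ∈ ({k} : Finset ℕ)} → W) => v ⟨k, Finset.mem_singleton_self k⟩)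
        ∘ fun a (i : {i // i ∈ ({k} : Finset ℕ)}) => ξ (i : ℕ) a) = ξ k := rfl
    rw [e1, e2] at h2
    exact h2
  have hlaw : ∀ k, P.map (fun ω => (Y k ω, ξ k ω)) = (P.map (Y k)).prod μ := by
    intro k
    rw [← hξlaw k]
    exact (indepFun_iff_map_prod_eq_prod_map_map (hYmeas k).aemeasurable
      (hξmeas k).aemeasurable).mp (hindep k)
  have hprobY : ∀ k, IsProbabilityMeasure (P.map (Y k)) := fun k =>
    Measure.isProbabilityMeasure_map (hYmeas k).aemeasurable
  -- transfer identity, Bochner version, for bounded measurable g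
  have keyE : ∀ (g : X → ℝ) (Cg : ℝ), Measurable g → (∀ y, |g y| ≤ Cg) → ∀ k,
      ∫ ω, g (Y (k+1) ω) ∂P = ∫ ω, ∫ w, g (F (Y k ω) (πR (Y k ω)) w) ∂μ ∂P := by
    intro g Cg hg hgC k
    haveI := hprobY k
    have hφ : Measurable fun p : X × W => g (F p.1 (πR p.1) p.2) := hg.comp mstep
    have hpair : Measurable fun ω => (Y k ω, ξ k ω) := (hYmeas k).prodMk (hξmeas k)
    have hint : Integrable (fun p : X × W => g (F p.1 (πR p.1) p.2)) ((P.map (Y k)).prod μ) := by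
      refine (integrable_const Cg).mono' hφ.aestronglyMeasurable ?_
      filter_upwards with p
      rw [Real.norm_eq_abs]; exact hgC _
    have h1 : ∫ ω, g (Y (k+1) ω) ∂P
        = ∫ p, g (F p.1 (πR p.1) p.2) ∂((P.map (Y k)).prod μ) := by
      rw [← hlaw k, integral_map hpair.aemeasurable hφ.aestronglyMeasurable]
      rfl
    have h2 := integral_prod _ hint
    have hinner : AEStronglyMeasurable (fun y => ∫ w, g (F y (πR y) w) ∂μ) (P.map (Y k)) :=
      (hφ.stronglyMeasurable.integral_prod_right').aestronglyMeasurable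
    rw [h1, h2, integral_map (hYmeas k).aemeasurable hinner]
  -- transfer identity, lintegral version, for the Lyapunov function
  have keyL : ∀ k, ∫⁻ ω, ENNReal.ofReal (L (Y (k+1) ω)) ∂P
      = ∫⁻ ω, ∫⁻ w, ENNReal.ofReal (L (F (Y k ω) (πR (Y k ω)) w)) ∂μ ∂P := by
    intro k
    haveI := hprobY k
    have hφ : Measurable fun p : X × W => ENNReal.ofReal (L (F p.1 (πR p.1) p.2)) :=
      (hLmeas.comp mstep).ennreal_ofReal
    have hpair : Measurable fun ω => (Y k ω, ξ k ω) := (hYmeas k).prodMk (hξmeas k)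
    have h1 : ∫⁻ ω, ENNReal.ofReal (L (Y (k+1) ω)) ∂P
        = ∫⁻ p, ENNReal.ofReal (L (F p.1 (πR p.1) p.2)) ∂((P.map (Y k)).prod μ) := by
      rw [← hlaw k, lintegral_map hφ hpair]
      rfl
    have h2 := lintegral_prod _ (hφ.aemeasurable (μ := (P.map (Y k)).prod μ))
    have hinner : Measurable fun y => ∫⁻ w, ENNReal.ofReal (L (F y (πR y) w)) ∂μ :=
      hφ.lintegral_prod_right'
    rw [h1, h2, lintegral_map hinner (hYmeas k)]
  -- absorption and hitting time
  have habsY : ∀ ω k n, k ≤ n → Y k ω = t → Y n ω = t := by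
    intro ω k n hkn hk
    exact traj_absorb F πR x t habs (fun i => ξ i ω) hk n hkn
  have hit_le : ∀ ω (k : ℕ), ¬ ((k : ℝ≥0∞) < hitTime t Y ω) → Y k ω = t := by
    intro ω k h
    by_contra hne
    apply h
    have h1 : ((k : ℝ≥0∞) + 1) ≤ hitTime t Y ω := by
      refine le_iInf fun j => le_iInf fun hj => ?_
      have hjk : k + 1 ≤ j := by
        by_contra hle
        push_neg at hle
        exact hne (habsY ω j k (by omega) hj)
      calc ((k : ℝ≥0∞) + 1) = ((k + 1 : ℕ) : ℝ≥0∞) := by push_cast; ring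
        _ ≤ (j : ℝ≥0∞) := by exact_mod_cast hjk
    calc (k : ℝ≥0∞) < (k : ℝ≥0∞) + 1 :=
          ENNReal.lt_add_right (by simp) one_ne_zero
      _ ≤ _ := h1
  -- the total cost as a sum of stage costs
  set tc : ℕ → ℝ≥0∞ := fun k => ∫⁻ ω, ENNReal.ofReal (f (Y k ω) (πR (Y k ω))) ∂P with htcdef
  have htc : totalCost P t f πR Y = ∑' k, tc k := by
    have hpt : ∀ ω (k : ℕ), (if (k : ℝ≥0∞) < hitTime t Y ω
        then ENNReal.ofReal (f (Y k ω) (πR (Y k ω))) else 0)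
        = ENNReal.ofReal (f (Y k ω) (πR (Y k ω))) := by
      intro ω k
      by_cases h : (k : ℝ≥0∞) < hitTime t Y ω
      · rw [if_pos h]
      · rw [if_neg h, hit_le ω k h, hπt, hft]; simp
    unfold totalCost
    simp only [hpt]
    exact lintegral_tsum fun k => ((hfk k).ennreal_ofReal).aemeasurable
  have htcne : ∀ k, tc k ≠ ⊤ := fun k =>
    ((ENNReal.le_tsum k).trans_lt (htc ▸ hproper_J)).ne
  have hfint : ∀ k, Integrable (fun ω => f (Y k ω) (πR (Y k ω))) P := by
    intro k
    refine ⟨(hfk k).aestronglyMeasurable, ?_⟩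
    rw [hasFiniteIntegral_iff_ofReal (Filter.Eventually.of_forall fun ω => hfnn _ _)]
    exact (htcne k).lt_top
  have hfeq : ∀ k, ∫ ω, f (Y k ω) (πR (Y k ω)) ∂P = (tc k).toReal := by
    intro k
    rw [integral_eq_lintegral_of_nonneg_ae (Filter.Eventually.of_forall fun ω => hfnn _ _)
      (hfk k).aestronglyMeasurable]
  -- integrability of the pieces
  have hinnerVs_meas : Measurable fun y => ∫ w, Vstar (F y (πR y) w) ∂μ :=
    ((hVsmeas.comp mstep).stronglyMeasurable.integral_prod_right').measurable
  have hinnerVs_bdd : ∀ y, |∫ w, Vstar (F y (πR y) w) ∂μ| ≤ C := by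
    intro y
    rw [← Real.norm_eq_abs]
    calc ‖∫ w, Vstar (F y (πR y) w) ∂μ‖ ≤ C * (μ Set.univ).toReal :=
          norm_integral_le_of_norm_le_const (Filter.Eventually.of_forall fun w => by
            rw [Real.norm_eq_abs]; exact hC _)
      _ = C := by simp
  have hinnerVs_int : ∀ k,
      Integrable (fun ω => ∫ w, Vstar (F (Y k ω) (πR (Y k ω)) w) ∂μ) P := by
    intro k
    refine (integrable_const C).mono'
      ((hinnerVs_meas.comp (hYmeas k)).aestronglyMeasurable) ?_
    filter_upwards with ω
    rw [Real.norm_eq_abs]; exact hinnerVs_bdd _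
  have hVsY_int : ∀ k, Integrable (fun ω => Vstar (Y k ω)) P := by
    intro k
    refine (integrable_const C).mono' ((hVsmeas.comp (hYmeas k)).aestronglyMeasurable) ?_
    filter_upwards with ω
    rw [Real.norm_eq_abs]; exact hC _
  -- the one-step (pointwise) inequality
  have hVle : ∀ y u, ∫ w, Vstar (F y u w) ∂μ ≤ (∫ w, V (F y u w) ∂μ) + ε := by
    intro y u
    have h1 : ∀ w, Vstar (F y u w) ≤ V (F y u w) + ε := by
      intro w
      have h2 := abs_le.mp (happrox (F y u w))
      linarith [h2.1]
    calc ∫ w, Vstar (F y u w) ∂μ ≤ ∫ w, (V (F y u w) + ε) ∂μ :=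
          integral_mono (hVsint y u) ((hVint y u).add (integrable_const ε)) h1
      _ = (∫ w, V (F y u w) ∂μ) + ε := by
          rw [integral_add (hVint y u) (integrable_const ε), integral_const]
          simp
  have hVge : ∀ y u, ∫ w, V (F y u w) ∂μ ≤ (∫ w, Vstar (F y u w) ∂μ) + ε := by
    intro y u
    have h1 : ∀ w, V (F y u w) ≤ Vstar (F y u w) + ε := by
      intro w
      have h2 := abs_le.mp (happrox (F y u w))
      linarith [h2.2]
    calc ∫ w, V (F y u w) ∂μ ≤ ∫ w, (Vstar (F y u w) + ε) ∂μ :=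
          integral_mono (hVint y u) ((hVsint y u).add (integrable_const ε)) h1
      _ = (∫ w, Vstar (F y u w) ∂μ) + ε := by
          rw [integral_add (hVsint y u) (integrable_const ε), integral_const]
          simp
  have hstep_nt : ∀ y, y ≠ t →
      f y (πR y) + ∫ w, Vstar (F y (πR y) w) ∂μ ≤ Vstar y + 2 * ε := by
    intro y hy
    have hb : Vstar y = ⨅ u : Ua y, (f y (u : U) + ∫ w, Vstar (F y (u : U) w) ∂μ) := by
      rw [hVsfix y]
      unfold bellman
      rw [if_neg hy]
    obtain ⟨hmem, hopt⟩ := hgreedy y hy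
    haveI : Nonempty (Ua y) := (hUne y).to_subtype
    have key : f y (πR y) + (∫ w, Vstar (F y (πR y) w) ∂μ) - 2 * ε
        ≤ ⨅ u : Ua y, (f y (u : U) + ∫ w, Vstar (F y (u : U) w) ∂μ) := by
      refine le_ciInf fun u => ?_
      have h1 := hVle y (πR y)
      have h2 := hopt u u.2
      have h3 := hVge y (u : U)
      linarith
    rw [← hb] at key
    linarith
  have hterm : f t (πR t) + ∫ w, Vstar (F t (πR t) w) ∂μ = 0 := by
    rw [hπt, hft]
    simp [hFt, hVst]
  -- expected one-step inequality
  set a : ℕ → ℝ := fun k => ∫ ω, Vstar (Y k ω) ∂P with hadef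
  set q : ℕ → ℝ := fun k => (P {ω | Y k ω ≠ t}).toReal with hqdef
  have hsetmeas : ∀ k, MeasurableSet {ω | Y k ω ≠ t} := fun k =>
    ((hYmeas k) (measurableSet_singleton t)).compl
  have hEstep : ∀ k, (tc k).toReal + a (k+1) ≤ a k + 2 * ε * q k := by
    intro k
    have hL1 : (tc k).toReal + a (k+1)
        = ∫ ω, (f (Y k ω) (πR (Y k ω)) + ∫ w, Vstar (F (Y k ω) (πR (Y k ω)) w) ∂μ) ∂P := by
      rw [integral_add (hfint k) (hinnerVs_int k), hfeq k, ← keyE Vstar C hVsmeas hC k]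
    have hR1 : a k + 2 * ε * q k
        = ∫ ω, (Vstar (Y k ω)
            + Set.indicator {ω | Y k ω ≠ t} (fun _ => 2 * ε) ω) ∂P := by
      rw [integral_add (hVsY_int k) ((integrable_const (2*ε)).indicator (hsetmeas k)),
        integral_indicator_const _ (hsetmeas k)]
      simp only [hadef, hqdef, smul_eq_mul, measureReal_def]
      ring
    rw [hL1, hR1]
    refine integral_mono ((hfint k).add (hinnerVs_int k))
      ((hVsY_int k).add ((integrable_const (2*ε)).indicator (hsetmeas k))) ?_
    intro ω
    dsimp only
    by_cases h : Y k ω = t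
    · have hind : ω ∉ {ω | Y k ω ≠ t} := by simp [h]
      simp only [h, Set.indicator_of_notMem hind, add_zero, hVst]
      rw [hterm]
    · rw [Set.indicator_of_mem (show ω ∈ {ω | Y k ω ≠ t} from h)]
      exact hstep_nt _ h
  have hsum : ∀ n, (∑ k ∈ Finset.range n, (tc k).toReal) + a n
      ≤ a 0 + 2 * ε * ∑ k ∈ Finset.range n, q k := by
    intro n
    induction n with
    | zero => simp
    | succ p ih =>
        rw [Finset.sum_range_succ, Finset.sum_range_succ, mul_add]
        have h1 := hEstep p
        linarith
  -- Lyapunov drift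
  set r : ℕ → ℝ≥0∞ := fun k => P {ω | Y k ω ≠ t} with hrdef
  set m : ℕ → ℝ≥0∞ := fun k => ∫⁻ ω, ENNReal.ofReal (L (Y k ω)) ∂P with hmdef
  have hmdrift : ∀ k, m (k+1) + ENNReal.ofReal c * r k ≤ m k := by
    intro k
    have hpt : ∀ ω, (∫⁻ w, ENNReal.ofReal (L (F (Y k ω) (πR (Y k ω)) w)) ∂μ)
        + Set.indicator {ω | Y k ω ≠ t} (fun _ => ENNReal.ofReal c) ω
        ≤ ENNReal.ofReal (L (Y k ω)) := by
      intro ω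
      by_cases h : Y k ω = t
      · have hind : ω ∉ {ω | Y k ω ≠ t} := by simp [h]
        rw [Set.indicator_of_notMem hind, add_zero, h]
        simp only [habs]
        rw [lintegral_const]
        simp
      · rw [Set.indicator_of_mem (show ω ∈ {ω | Y k ω ≠ t} from h)]
        have hdr := hdrift ω k h
        have h0 : 0 ≤ ∫ w, L (F (Y k ω) (πR (Y k ω)) w) ∂μ :=
          integral_nonneg fun w => hL0 _
        have hirw : (∫⁻ w, ENNReal.ofReal (L (F (Y k ω) (πR (Y k ω)) w)) ∂μ)
            = ENNReal.ofReal (∫ w, L (F (Y k ω) (πR (Y k ω)) w) ∂μ) :=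
          (ofReal_integral_eq_lintegral_ofReal (hLint _ _)
            (Filter.Eventually.of_forall fun w => hL0 _)).symm
        rw [hirw, ← ENNReal.ofReal_add h0 hc.le]
        exact ENNReal.ofReal_le_ofReal (by linarith)
    have h1 : m (k+1) = ∫⁻ ω, ∫⁻ w, ENNReal.ofReal (L (F (Y k ω) (πR (Y k ω)) w)) ∂μ ∂P :=
      keyL k
    have h2 : ENNReal.ofReal c * r k
        = ∫⁻ ω, Set.indicator {ω | Y k ω ≠ t} (fun _ => ENNReal.ofReal c) ω ∂P := by
      rw [lintegral_indicator_const (hsetmeas k)]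
    have h3 : m (k+1) + ENNReal.ofReal c * r k
        = ∫⁻ ω, ((∫⁻ w, ENNReal.ofReal (L (F (Y k ω) (πR (Y k ω)) w)) ∂μ)
            + Set.indicator {ω | Y k ω ≠ t} (fun _ => ENNReal.ofReal c) ω) ∂P := by
      rw [h1, h2, ← lintegral_add_right _ (measurable_const.indicator (hsetmeas k))]
    rw [h3]
    exact lintegral_mono hpt
  have hm0 : m 0 = ENNReal.ofReal (L x) := by
    have h1 : ∀ ω, Y 0 ω = x := fun ω => rfl
    simp [hmdef, h1, lintegral_const]
  have hmsum : ∀ n, m n + ENNReal.ofReal c * ∑ k ∈ Finset.range n, r k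
      ≤ ENNReal.ofReal (L x) := by
    intro n
    induction n with
    | zero => simp [hm0]
    | succ p ih =>
        rw [Finset.sum_range_succ, mul_add]
        calc m (p+1) + (ENNReal.ofReal c * ∑ k ∈ Finset.range p, r k
              + ENNReal.ofReal c * r p)
            = (m (p+1) + ENNReal.ofReal c * r p)
              + ENNReal.ofReal c * ∑ k ∈ Finset.range p, r k := by ring
          _ ≤ m p + ENNReal.ofReal c * ∑ k ∈ Finset.range p, r k :=
              add_le_add_left (hmdrift p) _
          _ ≤ ENNReal.ofReal (L x) := ih
  have hrsum : ∀ n, (∑ k ∈ Finset.range n, r k) ≤ ENNReal.ofReal (L x / c) := by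
    intro n
    have h1 : ENNReal.ofReal c * ∑ k ∈ Finset.range n, r k ≤ ENNReal.ofReal (L x) :=
      le_trans le_add_self (hmsum n)
    rw [ENNReal.ofReal_div_of_pos hc,
      ENNReal.le_div_iff_mul_le (Or.inl (ENNReal.ofReal_pos.mpr hc).ne')
        (Or.inl ENNReal.ofReal_ne_top)]
    rwa [mul_comm]
  have hqsum : ∀ n, (∑ k ∈ Finset.range n, q k) ≤ L x / c := by
    intro n
    have h1 : (∑ k ∈ Finset.range n, q k) = (∑ k ∈ Finset.range n, r k).toReal := by
      rw [ENNReal.toReal_sum (fun k _ => measure_ne_top P _)]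
    rw [h1]
    exact ENNReal.toReal_le_of_le_ofReal (div_nonneg (hL0 x) hc.le) (hrsum n)
  have hbound : ∀ n, (∑ k ∈ Finset.range n, (tc k).toReal)
      ≤ a 0 - a n + 2 * ε * (L x / c) := by
    intro n
    have h1 := hsum n
    have h2 : 2 * ε * (∑ k ∈ Finset.range n, q k) ≤ 2 * ε * (L x / c) :=
      mul_le_mul_of_nonneg_left (hqsum n) (by linarith)
    linarith
  -- limits
  have hAlim : Tendsto (fun n => ∑ k ∈ Finset.range n, (tc k).toReal) atTop
      (𝓝 ((totalCost P t f πR Y).toReal)) := by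
    have h1 : Tendsto (fun n => ∑ k ∈ Finset.range n, tc k) atTop (𝓝 (∑' k, tc k)) :=
      ENNReal.tendsto_nat_tsum tc
    have h2 : (∑' k, tc k) ≠ ⊤ := by rw [← htc]; exact hproper_J.ne
    have h3 := (ENNReal.tendsto_toReal h2).comp h1
    have h4 : (fun n => ((∑ k ∈ Finset.range n, tc k)).toReal)
        = fun n => ∑ k ∈ Finset.range n, (tc k).toReal := by
      funext n; exact ENNReal.toReal_sum fun k _ => htcne k
    rw [htc, ← h4]
    exact h3
  have halim : Tendsto a atTop (𝓝 0) := by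
    have hmeasn : ∀ n : ℕ, AEStronglyMeasurable (fun ω => Vstar (Y n ω)) P :=
      fun n => (hVsmeas.comp (hYmeas n)).aestronglyMeasurable
    have hbd : ∀ n : ℕ, ∀ᵐ ω ∂P, ‖Vstar (Y n ω)‖ ≤ C :=
      fun n => Filter.Eventually.of_forall fun ω => by rw [Real.norm_eq_abs]; exact hC _
    have hlim : ∀ᵐ ω ∂P, Tendsto (fun n => Vstar (Y n ω)) atTop (𝓝 0) := by
      filter_upwards [hproper_tau] with ω hω
      obtain ⟨k0, hk0⟩ : ∃ k, Y k ω = t := by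
        by_contra hno
        push_neg at hno
        have hT : hitTime t Y ω = ⊤ := by
          simp [hitTime, hno]
        rw [hT] at hω
        exact lt_irrefl _ hω
      apply tendsto_atTop_of_eventually_const (i₀ := k0)
      intro n hn
      rw [habsY ω k0 n hn hk0, hVst]
    have h5 := tendsto_integral_of_dominated_convergence (fun _ => C) hmeasn
      (integrable_const C) hbd hlim
    simpa [hadef] using h5
  have ha0 : a 0 = Vstar x := by
    have h1 : ∀ ω, Y 0 ω = x := fun ω => rfl
    simp [hadef, h1]
  have hBlim : Tendsto (fun n => a 0 - a n + 2 * ε * (L x / c)) atTop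
      (𝓝 (a 0 - 0 + 2 * ε * (L x / c))) :=
    (tendsto_const_nhds.sub halim).add tendsto_const_nhds
  have hfinal := le_of_tendsto_of_tendsto' hAlim hBlim hbound
  rw [ha0] at hfinal
  have hrg : 2 * ε * (L x / c) = 2 * ε / c * L x := by ring
  linarith
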